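/- If a, b, c are positive reals linearly independent over ℚ, then the box a×b×c cannot be partitioned into finitely many boxes each having at most 2 distinct side lengths. -/

import Mathlib

/-- An axis-parallel box in ℝⁿ with positive side lengths. -/
structure Box (n : ℕ) where
  lower : Fin n → ℝ
  upper : Fin n → ℝ
  lower_lt_upper : ∀ i, lower i < upper i

namespace Box

/-- The closed box as a subset of ℝⁿ. -/
def toSet {n : ℕ} (B : Box n) : Set (Fin n → ℝ) :=
  Set.univ.pi fun i => Set.Icc (B.lower i) (B.upper i)

/-- The open interior of the box. -/
def interiorSet {n : ℕ} (B : Box n) : Set (Fin n → ℝ) :=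
  Set.univ.pi fun i => Set.Ioo (B.lower i) (B.upper i)

/-- The side length of the box in direction `i`. -/
def side {n : ℕ} (B : Box n) (i : Fin n) : ℝ := B.upper i - B.lower i

end Box

/-- The boxes `t` form a finite partition (dissection) of `B`:
pairwise disjoint interiors, and their union covers `B`. -/
def IsDissection {n m : ℕ} (B : Box n) (t : Fin m → Box n) : Prop :=
  (∀ i j, i ≠ j → Disjoint (t i).interiorSet (t j).interiorSet) ∧
  (⋃ i, (t i).toSet) = B.toSet

/-- `P` is cut by a hyperplane parallel to a pair of its faces into `P₁` and `P₂`. -/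
def IsSplit {n : ℕ} (P P₁ P₂ : Box n) : Prop :=
  ∃ (j : Fin n) (c : ℝ), P.lower j < c ∧ c < P.upper j ∧
    P₁.lower = P.lower ∧ P₁.upper = Function.update P.upper j c ∧
    P₂.lower = Function.update P.lower j c ∧ P₂.upper = P.upper

/-! ### Auxiliary results -/

/-- A `ℚ`-linear functional with prescribed values on a `ℚ`-linearly independent triple. -/
private lemma exists_dual_triple (a b c : ℝ) (hli : LinearIndependent ℚ ![a, b, c])
    (w₀ w₁ w₂ : ℝ) :
    ∃ f : ℝ →ₗ[ℚ] ℝ, f a = w₀ ∧ f b = w₁ ∧ f c = w₂ := by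
  have hinj := hli.injective
  have hba : b ≠ a := fun h =>
    absurd (hinj (show ![a, b, c] 1 = ![a, b, c] 0 by simpa using h)) (by decide)
  have hca : c ≠ a := fun h =>
    absurd (hinj (show ![a, b, c] 2 = ![a, b, c] 0 by simpa using h)) (by decide)
  have hcb : c ≠ b := fun h =>
    absurd (hinj (show ![a, b, c] 2 = ![a, b, c] 1 by simpa using h)) (by decide)
  have hs : LinearIndepOn ℚ id (Set.range ![a, b, c]) := hli.linearIndepOn_id
  let bs : Module.Basis (hs.extend (Set.subset_univ _)) ℚ ℝ := Module.Basis.extend hs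
  let vals : ℝ → ℝ := fun v => if v = a then w₀ else if v = b then w₁ else if v = c then w₂ else 0
  have key : ∀ v : ℝ, ∀ hv : v ∈ hs.extend (Set.subset_univ _),
      (bs.constr ℚ fun x => vals (x : ℝ)) v = vals v := by
    intro v hv
    have h1 := bs.constr_basis ℚ (fun x => vals (x : ℝ)) ⟨v, hv⟩
    rwa [Module.Basis.extend_apply_self] at h1
  have hamem : a ∈ hs.extend (Set.subset_univ _) := hs.subset_extend _ ⟨0, by simp⟩
  have hbmem : b ∈ hs.extend (Set.subset_univ _) := hs.subset_extend _ ⟨1, by simp⟩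
  have hcmem : c ∈ hs.extend (Set.subset_univ _) := hs.subset_extend _ ⟨2, by simp⟩
  refine ⟨bs.constr ℚ fun x => vals (x : ℝ), ?_, ?_, ?_⟩
  · rw [key a hamem]; simp [vals]
  · rw [key b hbmem]; simp [vals, hba]
  · rw [key c hcmem]; simp [vals, hca, hcb]

/-- The midpoint of a box belongs to its open interior. -/
private lemma mid_mem_interior (P : Box 3) :
    (fun k => (P.lower k + P.upper k) / 2) ∈ P.interiorSet := by
  intro k _
  constructor <;> · have := P.lower_lt_upper k; dsimp only; linarith

/-- The fundamental dissection invariant: for `ℚ`-linear functionals `f, g, h`,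
the sum over the pieces of `f(x)·g(y)·h(z)` (where `x, y, z` are the side lengths)
equals the value on the big box. -/
private lemma dissection_invariant {m : ℕ} (B : Box 3) (t : Fin m → Box 3)
    (hd : IsDissection B t) (f g h : ℝ →ₗ[ℚ] ℝ) :
    ∑ i, f ((t i).side 0) * g ((t i).side 1) * h ((t i).side 2)
      = f (B.side 0) * g (B.side 1) * h (B.side 2) := by
  classical
  -- conversion to `BoxIntegral` boxes
  let J : Box 3 → BoxIntegral.Box (Fin 3) := fun P => ⟨P.lower, P.upper, P.lower_lt_upper⟩
  have hsub : ∀ i, (t i).toSet ⊆ B.toSet := fun i =>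
    hd.2 ▸ Set.subset_iUnion (fun i => (t i).toSet) i
  have hmemtoSet : ∀ (P : Box 3) (x : Fin 3 → ℝ),
      x ∈ P.toSet ↔ ∀ k, P.lower k ≤ x k ∧ x k ≤ P.upper k := by
    intro P x
    constructor
    · intro hx k; exact hx k (Set.mem_univ k)
    · intro hx k _; exact hx k
  have hle : ∀ i, J (t i) ≤ J B := by
    intro i
    rw [BoxIntegral.Box.le_iff_bounds]
    constructor
    · intro k
      have := (hmemtoSet B _).1 (hsub i ((hmemtoSet (t i) _).2
        (fun k => ⟨le_refl _, ((t i).lower_lt_upper k).le⟩)))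
      exact (this k).1
    · intro k
      have := (hmemtoSet B _).1 (hsub i ((hmemtoSet (t i) _).2
        (fun k => ⟨((t i).lower_lt_upper k).le, le_refl _⟩)))
      exact (this k).2
  have hmemJ : ∀ (P : Box 3) (x : Fin 3 → ℝ),
      x ∈ J P ↔ ∀ k, P.lower k < x k ∧ x k ≤ P.upper k := by
    intro P x
    rw [BoxIntegral.Box.mem_def]
    exact forall_congr' fun k => Iff.rfl
  -- injectivity
  have hJinj : ∀ i j, J (t i) = J (t j) → i = j := by
    intro i j hij
    by_contra hne
    have hl : (t i).lower = (t j).lower := congrArg BoxIntegral.Box.lower hij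
    have hu : (t i).upper = (t j).upper := congrArg BoxIntegral.Box.upper hij
    have hint : (t i).interiorSet = (t j).interiorSet := by
      unfold Box.interiorSet; rw [hl, hu]
    have hdisj := hd.1 i j hne
    rw [hint] at hdisj
    exact absurd (hdisj.le_bot ⟨mid_mem_interior (t j), mid_mem_interior (t j)⟩) (by simp)
  -- the prepartition
  have hdisjJ : ∀ i j, i ≠ j → Disjoint ((J (t i) : Set (Fin 3 → ℝ))) (J (t j)) := by
    intro i j hne
    rw [Set.disjoint_left]
    intro p hpi hpj
    have hpi' := (hmemJ (t i) p).1 hpi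
    have hpj' := (hmemJ (t j) p).1 hpj
    set q : Fin 3 → ℝ := fun k => (max ((t i).lower k) ((t j).lower k) + p k) / 2 with hq
    have hqi : q ∈ (t i).interiorSet := by
      intro k _
      have h1 := (hpi' k).1; have h2 := (hpi' k).2
      have h3 := (hpj' k).1
      have hmax : max ((t i).lower k) ((t j).lower k) < p k := max_lt h1 h3
      have hge : (t i).lower k ≤ max ((t i).lower k) ((t j).lower k) := le_max_left _ _
      constructor <;> (simp only [hq]; linarith)
    have hqj : q ∈ (t j).interiorSet := by
      intro k _
      have h1 := (hpj' k).1; have h2 := (hpj' k).2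
      have h3 := (hpi' k).1
      have hmax : max ((t i).lower k) ((t j).lower k) < p k := max_lt h3 h1
      have hge : (t j).lower k ≤ max ((t i).lower k) ((t j).lower k) := le_max_right _ _
      constructor <;> (simp only [hq]; linarith)
    exact absurd ((hd.1 i j hne).le_bot ⟨hqi, hqj⟩) (by simp)
  let π : BoxIntegral.Prepartition (J B) :=
    { boxes := Finset.univ.image fun i => J (t i)
      le_of_mem' := by
        intro Jb hJb
        rcases Finset.mem_image.1 hJb with ⟨i, -, rfl⟩
        exact hle i
      pairwiseDisjoint := by
        intro J₁ h₁ J₂ h₂ hne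
        rcases Finset.mem_image.1 (Finset.mem_coe.1 h₁) with ⟨i, -, rfl⟩
        rcases Finset.mem_image.1 (Finset.mem_coe.1 h₂) with ⟨j, -, rfl⟩
        have hij : i ≠ j := fun hh => hne (by rw [hh])
        exact hdisjJ i j hij }
  -- it is a partition
  have hpart : π.IsPartition := by
    intro x hx
    have hx' := (hmemJ B x).1 hx
    -- pick a small ε
    let D : Finset ℝ :=
      ((Finset.univ.image fun p : Fin m × Fin 3 => x p.2 - (t p.1).upper p.2) ∪
        Finset.univ.image fun k => x k - B.lower k).filter fun r => 0 < r
    have hD0 : (x 0 - B.lower 0) ∈ D := by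
      refine Finset.mem_filter.2 ⟨Finset.mem_union_right _ ?_, by linarith [(hx' 0).1]⟩
      exact Finset.mem_image.2 ⟨0, Finset.mem_univ _, rfl⟩
    have hDne : D.Nonempty := ⟨_, hD0⟩
    set ε : ℝ := D.min' hDne / 2 with hεdef
    have hmin_pos : 0 < D.min' hDne := (Finset.mem_filter.1 (D.min'_mem hDne)).2
    have hεpos : 0 < ε := by positivity
    have hεlt : ∀ r ∈ D, ε < r := by
      intro r hr
      have h1 := D.min'_le r hr
      rw [hεdef]; linarith
    set q : Fin 3 → ℝ := fun k => x k - ε with hqdef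
    have hqB : q ∈ B.toSet := by
      refine (hmemtoSet B q).2 fun k => ?_
      have hk1 := (hx' k).1; have hk2 := (hx' k).2
      have hmem : (x k - B.lower k) ∈ D := by
        refine Finset.mem_filter.2 ⟨Finset.mem_union_right _ ?_, by linarith⟩
        exact Finset.mem_image.2 ⟨k, Finset.mem_univ _, rfl⟩
      have := hεlt _ hmem
      constructor <;> (simp only [hqdef]; linarith)
    have : q ∈ ⋃ i, (t i).toSet := hd.2.symm ▸ hqB
    rcases Set.mem_iUnion.1 this with ⟨i, hqi⟩
    have hqi' := (hmemtoSet (t i) q).1 hqi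
    refine ⟨J (t i), Finset.mem_image.2 ⟨i, Finset.mem_univ _, rfl⟩, (hmemJ (t i) x).2 fun k => ?_⟩
    have h1 := (hqi' k).1; have h2 := (hqi' k).2
    constructor
    · have : q k < x k := by simp only [hqdef]; linarith
      calc (t i).lower k ≤ q k := h1
        _ < x k := this
    · by_contra hlt
      push_neg at hlt
      have hmem : (x k - (t i).upper k) ∈ D := by
        refine Finset.mem_filter.2 ⟨Finset.mem_union_left _ ?_, by linarith⟩
        exact Finset.mem_image.2 ⟨(i, k), Finset.mem_univ _, rfl⟩
      have := hεlt _ hmem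
      have : (t i).upper k < q k := by simp only [hqdef]; linarith
      linarith
  -- the box-additive map
  let ν : BoxIntegral.Box (Fin 3) → ℝ := fun Jb =>
    f (Jb.upper 0 - Jb.lower 0) * g (Jb.upper 1 - Jb.lower 1) * h (Jb.upper 2 - Jb.lower 2)
  have hν : ∀ (P : Box 3), ν (J P) = f (P.side 0) * g (P.side 1) * h (P.side 2) := fun P => rfl
  have hsplit : ∀ I : BoxIntegral.Box (Fin 3), (I : WithTop (BoxIntegral.Box (Fin 3))) ≤ ⊤ →
      ∀ {i : Fin 3} {y : ℝ}, y ∈ Set.Ioo (I.lower i) (I.upper i) →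
      (I.splitLower i y).elim' 0 ν + (I.splitUpper i y).elim' 0 ν = ν I := by
    intro I _ i y hy
    rw [BoxIntegral.Box.splitLower_def hy, BoxIntegral.Box.splitUpper_def hy]
    simp only [← WithBot.some_eq_coe, Option.elim']
    show f (Function.update I.upper i y 0 - I.lower 0) * g (Function.update I.upper i y 1 - I.lower 1)
          * h (Function.update I.upper i y 2 - I.lower 2)
        + f (I.upper 0 - Function.update I.lower i y 0) * g (I.upper 1 - Function.update I.lower i y 1)
          * h (I.upper 2 - Function.update I.lower i y 2) = ν I
    have hfadd : f (y - I.lower 0) + f (I.upper 0 - y) = f (I.upper 0 - I.lower 0) := by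
      rw [← map_add]; congr 1; ring
    have hgadd : g (y - I.lower 1) + g (I.upper 1 - y) = g (I.upper 1 - I.lower 1) := by
      rw [← map_add]; congr 1; ring
    have hhadd : h (y - I.lower 2) + h (I.upper 2 - y) = h (I.upper 2 - I.lower 2) := by
      rw [← map_add]; congr 1; ring
    fin_cases i <;>
      simp (config := { decide := true }) only [Function.update_apply, ite_true, ite_false]
    · show f (y - I.lower 0) * _ * _ + f (I.upper 0 - y) * _ * _ = ν I
      linear_combination (g (I.upper 1 - I.lower 1) * h (I.upper 2 - I.lower 2)) * hfadd
    · show _ * g (y - I.lower 1) * _ + _ * g (I.upper 1 - y) * _ = ν I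
      linear_combination (f (I.upper 0 - I.lower 0) * h (I.upper 2 - I.lower 2)) * hgadd
    · show _ * _ * h (y - I.lower 2) + _ * _ * h (I.upper 2 - y) = ν I
      linear_combination (f (I.upper 0 - I.lower 0) * g (I.upper 1 - I.lower 1)) * hhadd
  let νBA : BoxIntegral.BoxAdditiveMap (Fin 3) ℝ ⊤ :=
    BoxIntegral.BoxAdditiveMap.ofMapSplitAdd ν ⊤ hsplit
  have hsum : ∑ Jb ∈ π.boxes, ν Jb = ν (J B) :=
    νBA.sum_partition_boxes le_top hpart
  rw [Finset.sum_image (fun i _ j _ hij => hJinj i j hij)] at hsum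
  simpa only [hν] using hsum

/-- If `a, b, c` are linearly independent over `ℚ` then the box `a × b × c`
cannot be partitioned into bars. -/
theorem no_bar_partition_of_linearIndependent (a b c : ℝ)
    (ha : 0 < a) (hb : 0 < b) (hc : 0 < c)
    (hli : LinearIndependent ℚ ![a, b, c]) :
    ∀ B : Box 3, B.side = ![a, b, c] →
      ¬ ∃ (m : ℕ) (t : Fin m → Box 3), IsDissection B t ∧
        ∀ i, (Finset.univ.image (t i).side).card ≤ 2 := by
  intro B hside hcon
  obtain ⟨m, t, hd, hbar⟩ := hcon
  obtain ⟨A, hA1, hA2, hA3⟩ := exists_dual_triple a b c hli 1 0 0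
  obtain ⟨Bf, hB1, hB2, hB3⟩ := exists_dual_triple a b c hli 0 1 0
  obtain ⟨Cf, hC1, hC2, hC3⟩ := exists_dual_triple a b c hli 0 0 1
  have hs0 : B.side 0 = a := by rw [hside]; rfl
  have hs1 : B.side 1 = b := by rw [hside]; rfl
  have hs2 : B.side 2 = c := by rw [hside]; rfl
  have key : ∀ f g h : ℝ →ₗ[ℚ] ℝ,
      ∑ i, f ((t i).side 0) * g ((t i).side 1) * h ((t i).side 2) = f a * g b * h c := by
    intro f g h
    rw [dissection_invariant B t hd f g h, hs0, hs1, hs2]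
  -- each piece has two equal sides
  have htwo : ∀ i, (t i).side 0 = (t i).side 1 ∨ (t i).side 0 = (t i).side 2 ∨
      (t i).side 1 = (t i).side 2 := by
    intro i
    by_contra hcon2
    push_neg at hcon2
    obtain ⟨h01, h02, h12⟩ := hcon2
    have hinj : Function.Injective (t i).side := by
      intro j k hjk
      fin_cases j <;> fin_cases k <;> first | rfl | (exfalso; simp_all)
    have hcard : (Finset.univ.image (t i).side).card = 3 := by
      rw [Finset.card_image_of_injective _ hinj, Finset.card_univ, Fintype.card_fin]
    have := hbar i
    omega
  -- antisymmetrized sum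
  have hzero : ∀ i ∈ Finset.univ (α := Fin m),
      ((((A ((t i).side 0) * Bf ((t i).side 1) * Cf ((t i).side 2)
        - A ((t i).side 0) * Cf ((t i).side 1) * Bf ((t i).side 2))
        - Bf ((t i).side 0) * A ((t i).side 1) * Cf ((t i).side 2))
        + Bf ((t i).side 0) * Cf ((t i).side 1) * A ((t i).side 2))
        + Cf ((t i).side 0) * A ((t i).side 1) * Bf ((t i).side 2))
        - Cf ((t i).side 0) * Bf ((t i).side 1) * A ((t i).side 2) = 0 := by
    intro i _
    rcases htwo i with hh | hh | hh <;> rw [hh] <;> ring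
  have hsum0 := Finset.sum_eq_zero hzero
  rw [Finset.sum_sub_distrib, Finset.sum_add_distrib, Finset.sum_add_distrib,
    Finset.sum_sub_distrib, Finset.sum_sub_distrib] at hsum0
  rw [key A Bf Cf, key A Cf Bf, key Bf A Cf, key Bf Cf A, key Cf A Bf, key Cf Bf A] at hsum0
  rw [hA1, hA2, hA3, hB1, hB2, hB3, hC1, hC2, hC3] at hsum0
  norm_num at hsum0
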